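/- Let G ≤ Sym(Ω) be transitive and φ : G → Alt_k an epimorphism with k ≥ 5. Let N = ker(φ), and let Δ = Ω be an orbit of G containing an 'atteint' (affected) point, i.e., a point x with φ(G_x) ≠ Alt_k. Then every orbit of N contained in Δ has length at most |Δ|/k. -/

import Mathlib

open Equiv Equiv.Perm Subgroup MulAction

section Helpers


lemma cycle_facts {α : Type*} [DecidableEq α] {c d e : α} (hcd : c ≠ d) (hce : c ≠ e)
    (hde : d ≠ e) :
    (swap c e * swap c d) c = d ∧ (swap c e * swap c d) d = e ∧ (swap c e * swap c d) e = c ∧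
    ∀ x, x ≠ c → x ≠ d → x ≠ e → (swap c e * swap c d) x = x := by
  refine ⟨?_, ?_, ?_, fun x hxc hxd hxe => ?_⟩ <;>
    simp [Perm.mul_apply, swap_apply_def, hcd, hce, hde, hcd.symm, hce.symm,
      hde.symm] <;>
    aesop

lemma inv_fix {α : Type*} {f : Equiv.Perm α} {x : α} (h : f x = x) : f⁻¹ x = x := by
  conv_lhs => rw [← h]
  exact f.symm_apply_apply x

lemma inv_img {α : Type*} {f : Equiv.Perm α} {x y : α} (h : f x = y) : f⁻¹ y = x := by
  rw [← h]; exact f.symm_apply_apply x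

theorem alt_simple_core {α : Type*} [Fintype α] [DecidableEq α] (h5 : 5 ≤ Fintype.card α)
    (K : Subgroup (alternatingGroup α)) (hNorm : K.Normal) (hK : K ≠ ⊥) : K = ⊤ := by
  classical
  have hex : ∃ n : ℕ, ∃ g : alternatingGroup α, g ∈ K ∧ g ≠ 1 ∧ (g : Perm α).support.card = n := by
    obtain ⟨⟨g, hgK⟩, hg1⟩ := Subgroup.ne_bot_iff_exists_ne_one.mp hK
    exact ⟨(g : Perm α).support.card, g, hgK, fun h => hg1 (Subtype.ext h), rfl⟩
  obtain ⟨f, hfK, hf1, hfcard⟩ := Nat.find_spec hex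
  have hmin : ∀ g : alternatingGroup α, g ∈ K → g ≠ 1 →
      (f : Perm α).support.card ≤ (g : Perm α).support.card := fun g hgK hg1 =>
    hfcard ▸ Nat.find_min' hex ⟨g, hgK, hg1, rfl⟩
  clear hfcard
  have hf1' : (f : Perm α) ≠ 1 := fun h => hf1 (Subtype.ext h)
  have hsign : Equiv.Perm.sign (f : Perm α) = 1 := f.2
  have h2le : 2 ≤ (f : Perm α).support.card := one_lt_card_support_of_ne_one hf1'
  have hne2 : (f : Perm α).support.card ≠ 2 := by
    intro h
    obtain ⟨x, y, hxy, hswap⟩ := card_support_eq_two.mp h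
    rw [hswap, sign_swap hxy] at hsign
    exact absurd hsign (by decide)
  have hlt4 : (f : Perm α).support.card < 4 := by
    by_contra h4
    push_neg at h4
    set F : Perm α := (f : Perm α) with hF
    by_cases hA : ∃ a, F a ≠ a ∧ F (F a) ≠ a
    · -- Case A : f has a cycle of length ≥ 3
      obtain ⟨a, ha1, ha2⟩ := hA
      obtain ⟨b, hb⟩ : ∃ t, F a = t := ⟨_, rfl⟩
      obtain ⟨c, hc⟩ : ∃ t, F b = t := ⟨_, rfl⟩
      have hba : b ≠ a := by rw [← hb]; exact ha1
      have hca : c ≠ a := by rw [← hc, ← hb]; exact ha2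
      have hcb : c ≠ b := fun h => hba (F.injective (by rw [hc, h]; exact hb.symm))
      have haS : a ∈ F.support := mem_support.mpr ha1
      have hbS : b ∈ F.support := mem_support.mpr (fun h => hcb (by rw [← hc, h]))
      have hcS : c ∈ F.support := by
        rw [← hc, Equiv.Perm.apply_mem_support]
        exact hbS
      by_cases h5s : 5 ≤ F.support.card
      · -- pick d e in support minus {a,b,c}
        have h3c : ({a, b, c} : Finset α).card ≤ 3 := by
          apply le_trans (Finset.card_insert_le _ _)
          apply Nat.succ_le_succ
          apply le_trans (Finset.card_insert_le _ _)
          simp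
        have hcard2 : 2 ≤ (F.support \ {a, b, c}).card := by
          have hle := Finset.le_card_sdiff ({a, b, c} : Finset α) F.support
          omega
        obtain ⟨d, hd, e, he, hde⟩ := Finset.one_lt_card.mp hcard2
        rw [Finset.mem_sdiff] at hd he
        obtain ⟨hdS, hd'⟩ := hd
        obtain ⟨heS, he'⟩ := he
        simp only [Finset.mem_insert, Finset.mem_singleton, not_or] at hd' he'
        obtain ⟨hda, hdb, hdc⟩ := hd'
        obtain ⟨hea, heb, hec⟩ := he'
        set τ : Perm α := swap c e * swap c d with hτ
        obtain ⟨hτc, hτd, hτe, hτfix⟩ := cycle_facts (Ne.symm hdc) (Ne.symm hec) hde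
        have hτ3 : IsThreeCycle τ := isThreeCycle_swap_mul_swap_same (Ne.symm hec) (Ne.symm hdc)
          (fun h => hde h.symm)
        set T : alternatingGroup α := ⟨τ, hτ3.mem_alternatingGroup⟩ with hT
        set g : alternatingGroup α := T * f * T⁻¹ * f⁻¹ with hg
        have hgK : g ∈ K :=
          Subgroup.mul_mem _ (hNorm.conj_mem f hfK T) (Subgroup.inv_mem _ hfK)
        have hgval : (g : Perm α) = τ * F * τ⁻¹ * F⁻¹ := rfl
        have hg1 : g ≠ 1 := by
          intro h
          have h0 : (g : Perm α) = 1 := congrArg Subtype.val h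
          rw [hgval] at h0
          have h' : τ * F * τ⁻¹ = F := mul_inv_eq_one.mp h0
          have hb' : (τ * F * τ⁻¹) b = F b := by rw [h']
          simp only [Perm.mul_apply] at hb'
          rw [inv_fix (hτfix b (Ne.symm hcb) (Ne.symm hdb) (Ne.symm heb)), hc, hτc] at hb'
          exact hdc hb'
        have hsub : (g : Perm α).support ⊆ F.support.erase b := by
          intro x hx
          rw [mem_support, hgval] at hx
          rw [Finset.mem_erase]
          constructor
          · intro hxb
            apply hx
            rw [hxb]
            simp only [Perm.mul_apply]
            rw [inv_img hb, inv_fix (hτfix a (Ne.symm hca) (Ne.symm hda) (Ne.symm hea)),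
              hb, hτfix b (Ne.symm hcb) (Ne.symm hdb) (Ne.symm heb)]
          · by_contra hxS
            apply hx
            have hfix : F x = x := notMem_support.mp hxS
            simp only [Perm.mul_apply]
            have hxc : x ≠ c := fun h => hxS (h ▸ hcS)
            have hxd : x ≠ d := fun h => hxS (h ▸ hdS)
            have hxe : x ≠ e := fun h => hxS (h ▸ heS)
            rw [inv_fix hfix, inv_fix (hτfix x hxc hxd hxe), hfix, hτfix x hxc hxd hxe]
        have hlt : (g : Perm α).support.card < F.support.card := by
          have := Finset.card_le_card hsub
          rw [Finset.card_erase_of_mem hbS] at this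
          omega
        exact absurd (hmin g hgK hg1) (by omega)
      · -- |supp| = 4 : f must be a 4-cycle, contradiction with evenness
        push_neg at h5s
        have h4s : F.support.card = 4 := by omega
        have h3c : ({a, b, c} : Finset α).card ≤ 3 := by
          apply le_trans (Finset.card_insert_le _ _)
          apply Nat.succ_le_succ
          apply le_trans (Finset.card_insert_le _ _)
          simp
        have hcard1 : 0 < (F.support \ {a, b, c}).card := by
          have hle := Finset.le_card_sdiff ({a, b, c} : Finset α) F.support
          omega
        obtain ⟨d, hd⟩ := Finset.card_pos.mp hcard1
        rw [Finset.mem_sdiff] at hd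
        obtain ⟨hdS, hd'⟩ := hd
        simp only [Finset.mem_insert, Finset.mem_singleton, not_or] at hd'
        obtain ⟨hda, hdb, hdc⟩ := hd'
        have hsubs : ({a, b, c, d} : Finset α) ⊆ F.support := by
          intro x hx
          simp only [Finset.mem_insert, Finset.mem_singleton] at hx
          rcases hx with rfl | rfl | rfl | rfl <;> assumption
        have hc4 : ({a, b, c, d} : Finset α).card = 4 := by
          rw [Finset.card_insert_of_notMem, Finset.card_insert_of_notMem,
            Finset.card_insert_of_notMem, Finset.card_singleton]
          · simp [Ne.symm hdc]
          · simp [Ne.symm hcb, Ne.symm hdb]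
          · simp [Ne.symm hba, Ne.symm hca, Ne.symm hda]
        have hsupp : F.support = {a, b, c, d} :=
          (Finset.eq_of_subset_of_card_le hsubs (by omega)).symm
        have hmemsupp : ∀ x, x ∈ F.support → x = a ∨ x = b ∨ x = c ∨ x = d := by
          intro x hx
          rw [hsupp] at hx
          simpa using hx
        have hFcS : F c ∈ F.support := Equiv.Perm.apply_mem_support.mpr hcS
        have hFcc : F c ≠ c := mem_support.mp hcS
        have hFcb : F c ≠ b := fun h => hca (F.injective (h.trans hb.symm))
        have hFcd : F c = d := by
          rcases hmemsupp _ hFcS with h | h | h | h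
          · exfalso
            have hFdS : F d ∈ F.support := Equiv.Perm.apply_mem_support.mpr hdS
            have h1 : F d ≠ a := fun hh => hdc (F.injective (hh.trans h.symm))
            have h2 : F d ≠ b := fun hh => hda (F.injective (hh.trans hb.symm))
            have h3 : F d ≠ c := fun hh => hdb (F.injective (hh.trans hc.symm))
            have h4' : F d ≠ d := mem_support.mp hdS
            rcases hmemsupp _ hFdS with hh | hh | hh | hh
            exacts [h1 hh, h2 hh, h3 hh, h4' hh]
          · exact absurd h hFcb
          · exact absurd h hFcc
          · exact h
        have hFda : F d = a := by
          have hFdS : F d ∈ F.support := Equiv.Perm.apply_mem_support.mpr hdS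
          have h2 : F d ≠ b := fun hh => hda (F.injective (hh.trans hb.symm))
          have h3 : F d ≠ c := fun hh => hdb (F.injective (hh.trans hc.symm))
          have h4' : F d ≠ d := mem_support.mp hdS
          rcases hmemsupp _ hFdS with hh | hh | hh | hh
          exacts [hh, absurd hh h2, absurd hh h3, absurd hh h4']
        have hFeq : F = swap a b * swap b c * swap c d := by
          ext x
          by_cases hx : x ∈ F.support
          · rcases hmemsupp _ hx with rfl | rfl | rfl | rfl
            · simp only [Perm.mul_apply]
              rw [swap_apply_of_ne_of_ne (Ne.symm hca) (Ne.symm hda),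
                swap_apply_of_ne_of_ne (Ne.symm hba) (Ne.symm hca), swap_apply_left]
              exact hb
            · simp only [Perm.mul_apply]
              rw [swap_apply_of_ne_of_ne (Ne.symm hcb) (Ne.symm hdb), swap_apply_left,
                swap_apply_of_ne_of_ne hca hcb]
              exact hc
            · simp only [Perm.mul_apply]
              rw [swap_apply_left, swap_apply_of_ne_of_ne hdb hdc,
                swap_apply_of_ne_of_ne hda hdb]
              exact hFcd
            · simp only [Perm.mul_apply]
              rw [swap_apply_right, swap_apply_right, swap_apply_right]
              exact hFda
          · have hxa : x ≠ a := fun h => hx (h ▸ haS)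
            have hxb : x ≠ b := fun h => hx (h ▸ hbS)
            have hxc : x ≠ c := fun h => hx (h ▸ hcS)
            have hxd : x ≠ d := fun h => hx (h ▸ hdS)
            simp only [Perm.mul_apply]
            rw [notMem_support.mp hx, swap_apply_of_ne_of_ne hxc hxd,
              swap_apply_of_ne_of_ne hxb hxc, swap_apply_of_ne_of_ne hxa hxb]
        rw [hFeq] at hsign
        simp only [map_mul, sign_swap (Ne.symm hba), sign_swap (Ne.symm hcb),
          sign_swap (Ne.symm hdc)] at hsign
        exact absurd hsign (by decide)
    · -- Case B : f is an involution
      push_neg at hA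
      have hB : ∀ x, F (F x) = x := by
        intro x
        by_cases h : F x = x
        · rw [h, h]
        · exact hA x h
      obtain ⟨a, haS⟩ := Finset.card_pos.mp (show 0 < F.support.card by omega)
      obtain ⟨b, hb⟩ : ∃ t, F a = t := ⟨_, rfl⟩
      have hba : b ≠ a := by rw [← hb]; exact mem_support.mp haS
      have hFba : F b = a := by rw [← hb, hB]
      have hbS : b ∈ F.support := mem_support.mpr (fun h => hba (hFba.symm.trans h).symm)
      have h2c : ({a, b} : Finset α).card ≤ 2 := by
        apply le_trans (Finset.card_insert_le _ _)
        simp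
      have hcpos : 0 < (F.support \ {a, b}).card := by
        have hle := Finset.le_card_sdiff ({a, b} : Finset α) F.support
        omega
      obtain ⟨c, hcmem⟩ := Finset.card_pos.mp hcpos
      rw [Finset.mem_sdiff] at hcmem
      obtain ⟨hcS, hc'⟩ := hcmem
      simp only [Finset.mem_insert, Finset.mem_singleton, not_or] at hc'
      obtain ⟨hca, hcb⟩ := hc'
      obtain ⟨d, hd⟩ : ∃ t, F c = t := ⟨_, rfl⟩
      have hdc : d ≠ c := by rw [← hd]; exact mem_support.mp hcS
      have hFdc : F d = c := by rw [← hd, hB]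
      have hda : d ≠ a := fun h => hcb (by rw [← hFdc, h]; exact hb)
      have hdb : d ≠ b := fun h => hca (F.injective ((hd.trans h).trans hb.symm))
      have hdS : d ∈ F.support := by
        rw [← hd]
        exact Equiv.Perm.apply_mem_support.mpr hcS
      have h4c : ({a, b, c, d} : Finset α).card ≤ 4 := by
        apply le_trans (Finset.card_insert_le _ _)
        apply Nat.succ_le_succ
        apply le_trans (Finset.card_insert_le _ _)
        apply Nat.succ_le_succ
        apply le_trans (Finset.card_insert_le _ _)
        simp
      have hepos : 0 < (Finset.univ \ {a, b, c, d} : Finset α).card := by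
        have hle := Finset.le_card_sdiff ({a, b, c, d} : Finset α) Finset.univ
        have huniv : (Finset.univ : Finset α).card = Fintype.card α := rfl
        omega
      obtain ⟨e, hemem⟩ := Finset.card_pos.mp hepos
      rw [Finset.mem_sdiff] at hemem
      obtain ⟨-, he'⟩ := hemem
      simp only [Finset.mem_insert, Finset.mem_singleton, not_or] at he'
      obtain ⟨hea, heb, hec, hed⟩ := he'
      set τ : Perm α := swap c e * swap c d with hτ
      obtain ⟨hτc, hτd, hτe, hτfix⟩ := cycle_facts (Ne.symm hdc) (Ne.symm hec) (Ne.symm hed)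
      have hτ3 : IsThreeCycle τ := isThreeCycle_swap_mul_swap_same (Ne.symm hec) (Ne.symm hdc)
        (fun h => hed h)
      set T : alternatingGroup α := ⟨τ, hτ3.mem_alternatingGroup⟩ with hT
      set g : alternatingGroup α := T * f * T⁻¹ * f⁻¹ with hg
      have hgK : g ∈ K :=
        Subgroup.mul_mem _ (hNorm.conj_mem f hfK T) (Subgroup.inv_mem _ hfK)
      have hgval : (g : Perm α) = τ * F * τ⁻¹ * F⁻¹ := rfl
      have hg1 : g ≠ 1 := by
        intro h
        have h0 : (g : Perm α) = 1 := congrArg Subtype.val h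
        rw [hgval] at h0
        have h' : τ * F * τ⁻¹ = F := mul_inv_eq_one.mp h0
        have hd' : (τ * F * τ⁻¹) d = F d := by rw [h']
        simp only [Perm.mul_apply] at hd'
        rw [inv_img hτc, hd, hτd, hFdc] at hd'
        exact hec hd'
      have hsub : (g : Perm α).support ⊆ insert e ((F.support.erase a).erase b) := by
        intro x hx
        rw [mem_support, hgval] at hx
        by_cases hxe : x = e
        · rw [hxe]
          exact Finset.mem_insert_self e _
        · apply Finset.mem_insert_of_mem
          rw [Finset.mem_erase, Finset.mem_erase]
          refine ⟨?_, ?_, ?_⟩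
          · intro hxb
            apply hx
            rw [hxb]
            simp only [Perm.mul_apply]
            rw [inv_img hb, inv_fix (hτfix a (Ne.symm hca) (Ne.symm hda) (Ne.symm hea)),
              hb, hτfix b (Ne.symm hcb) (Ne.symm hdb) (Ne.symm heb)]
          · intro hxa
            apply hx
            rw [hxa]
            simp only [Perm.mul_apply]
            rw [inv_img hFba, inv_fix (hτfix b (Ne.symm hcb) (Ne.symm hdb) (Ne.symm heb)),
              hFba, hτfix a (Ne.symm hca) (Ne.symm hda) (Ne.symm hea)]
          · by_contra hxS
            apply hx
            have hfix : F x = x := notMem_support.mp hxS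
            have hxc : x ≠ c := fun h => hxS (h ▸ hcS)
            have hxd : x ≠ d := fun h => hxS (h ▸ hdS)
            simp only [Perm.mul_apply]
            rw [inv_fix hfix, inv_fix (hτfix x hxc hxd hxe), hfix, hτfix x hxc hxd hxe]
      have hlt : (g : Perm α).support.card < F.support.card := by
        have h1 := Finset.card_le_card hsub
        have h2 := Finset.card_insert_le e ((F.support.erase a).erase b)
        have hbmem : b ∈ F.support.erase a := Finset.mem_erase.mpr ⟨hba, hbS⟩
        rw [Finset.card_erase_of_mem hbmem, Finset.card_erase_of_mem haS] at h2
        omega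
      exact absurd (hmin g hgK hg1) (by omega)
  have h3 : (f : Perm α).support.card = 3 := by omega
  have hf3 : IsThreeCycle (f : Perm α) := card_support_eq_three_iff.mp h3
  have hcl := hf3.alternating_normalClosure (by rwa [Nat.card_eq_fintype_card])
  rw [eq_top_iff, ← hcl]
  apply Subgroup.normalClosure_le_normal
  simpa using hfK


theorem index_ge (k : ℕ) (hk : 5 ≤ k)
    (hsimple : ∀ (K : Subgroup (alternatingGroup (Fin k))), K.Normal → K ≠ ⊥ → K = ⊤)
    (H : Subgroup (alternatingGroup (Fin k))) (hH : H ≠ ⊤) : k ≤ H.index := by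
  by_contra hlt
  push_neg at hlt
  have hcore : H.normalCore = ⊥ := by
    rcases eq_or_ne H.normalCore ⊥ with h | h
    · exact h
    · exact absurd ((hsimple _ H.normalCore_normal h) ▸ H.normalCore_le) (fun hle =>
        hH (top_le_iff.mp hle))
  have hinj : Function.Injective
      (MulAction.toPermHom (alternatingGroup (Fin k)) (alternatingGroup (Fin k) ⧸ H)) := by
    rw [← MonoidHom.ker_eq_bot_iff, ← Subgroup.normalCore_eq_ker]
    exact hcore
  have hcard := Nat.card_le_card_of_injective _ hinj
  have hnt : Nontrivial (Fin k) := Fin.nontrivial_iff_two_le.mpr (by omega)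
  have hAcard : 2 * Nat.card (alternatingGroup (Fin k)) = Nat.factorial k := by
    rw [Nat.card_eq_fintype_card, two_mul_card_alternatingGroup, Fintype.card_perm,
      Fintype.card_fin]
  have hfin : Finite (alternatingGroup (Fin k) ⧸ H) := Quotient.finite _
  have hPcard : Nat.card (Equiv.Perm (alternatingGroup (Fin k) ⧸ H))
      = Nat.factorial H.index := by
    classical
    have hfi : Fintype (alternatingGroup (Fin k) ⧸ H) := Fintype.ofFinite _
    rw [Nat.card_eq_fintype_card, Fintype.card_perm, ← Nat.card_eq_fintype_card,
      ← Subgroup.index_eq_card H]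
  have h1 : Nat.card (alternatingGroup (Fin k)) ≤ Nat.factorial (k - 1) := by
    refine hcard.trans ?_
    rw [hPcard]
    exact Nat.factorial_le (by omega)
  have hk1 : Nat.factorial k = k * Nat.factorial (k - 1) := by
    conv_lhs => rw [show k = (k - 1) + 1 by omega]
    rw [Nat.factorial_succ]
    congr 2
    omega
  have h2 : k * Nat.factorial (k - 1) ≤ 2 * Nat.factorial (k - 1) := by
    rw [← hk1, ← hAcard]
    omega
  have h3 : k ≤ 2 := Nat.le_of_mul_le_mul_right h2 (Nat.factorial_pos (k - 1))
  omega


theorem orbit_sup_eq {G Ω : Type*} [Group G] [MulAction G Ω] (N : Subgroup G) [N.Normal] (y : Ω)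
    (S : Subgroup G) (hS : S = MulAction.stabilizer G y) :
    MulAction.orbit (↥(N ⊔ S)) y = MulAction.orbit (↥N) y := by
  apply le_antisymm
  · rintro z ⟨⟨g, hg⟩, rfl⟩
    have hg' : g ∈ (↑(S ⊔ N) : Set G) := by rw [sup_comm] at hg; exact_mod_cast hg
    rw [Subgroup.mul_normal S N] at hg'
    obtain ⟨s, hs, n, hn, rfl⟩ := hg'
    refine ⟨⟨s * n * s⁻¹, Subgroup.Normal.conj_mem ‹N.Normal› n hn s⟩, ?_⟩
    have hsy : s • y = y := by rw [hS] at hs; exact hs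
    show (s * n * s⁻¹) • y = (⟨s * n, hg⟩ : ↥(N ⊔ S)) • y
    rw [Subgroup.smul_def]
    show (s * n * s⁻¹) • y = (s * n) • y
    have h2 : s⁻¹ • y = y := inv_smul_eq_iff.mpr hsy.symm
    rw [mul_smul, mul_smul, h2, mul_smul]
  · rintro z ⟨⟨g, hg⟩, rfl⟩
    exact ⟨⟨g, Subgroup.mem_sup_left hg⟩, rfl⟩

end Helpers

/-- Let `G` act transitively on `Ω` and `φ : G → Alt_k` be an epimorphism, `k ≥ 5`.
If some point of `Ω` is affected (i.e. `φ(G_x) ≠ Alt_k`), then every orbit of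
`N = ker φ` has length at most `|Ω|/k`. -/
theorem affected_orbit_small {Ω G : Type*} [Finite Ω] [Group G] [MulAction G Ω]
    [MulAction.IsPretransitive G Ω] {k : ℕ} (hk : 5 ≤ k)
    (φ : G →* alternatingGroup (Fin k)) (hφ : Function.Surjective φ)
    (haffected : ∃ x : Ω, (MulAction.stabilizer G x).map φ ≠ ⊤) :
    ∀ y : Ω, k * Nat.card (MulAction.orbit (↥φ.ker) y) ≤ Nat.card Ω := by
  intro y
  classical
  set N := φ.ker with hN
  set S := MulAction.stabilizer G y with hS
  -- φ(S) is a proper subgroup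
  have hSne : S.map φ ≠ ⊤ := by
    obtain ⟨x, hx⟩ := haffected
    obtain ⟨g, hg⟩ := MulAction.exists_smul_eq G x y
    intro htop
    apply hx
    have hstab : S = (MulAction.stabilizer G x).map (MulAut.conj g).toMonoidHom := by
      rw [hS, ← hg, MulAction.stabilizer_smul_eq_stabilizer_map_conj]
    rw [hstab, Subgroup.map_map] at htop
    have hcomp : φ.comp (MulAut.conj g).toMonoidHom
        = ((MulAut.conj (φ g)).toMonoidHom).comp φ := by
      ext h
      simp [MulAut.conj_apply]
    rw [hcomp, ← Subgroup.map_map] at htop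
    have hinj : Function.Injective (MulAut.conj (φ g)).toMonoidHom :=
      (MulAut.conj (φ g)).injective
    have := congrArg (Subgroup.comap (MulAut.conj (φ g)).toMonoidHom) htop
    rw [Subgroup.comap_map_eq_self_of_injective hinj, Subgroup.comap_top] at this
    exact this
  -- k ≤ index of φ(S)
  have hk' : k ≤ (S.map φ).index := by
    refine index_ge k hk (fun K hn hb => alt_simple_core ?_ K hn hb) _ hSne
    rw [Fintype.card_fin]
    exact hk
  -- |Ω| = index of S
  have hΩ : Nat.card Ω = S.index := (MulAction.index_stabilizer_of_transitive G y).symm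
  -- orbit card = relindex
  have hstabeq : ∀ (K : Subgroup G), MulAction.stabilizer (↥K) y
      = (MulAction.stabilizer G y).subgroupOf K := by
    intro K
    ext ⟨g, hg⟩
    simp [MulAction.mem_stabilizer_iff, Subgroup.mem_subgroupOf, Subgroup.smul_def]
  have horb : MulAction.orbit (↥(N ⊔ S)) y = MulAction.orbit (↥N) y := orbit_sup_eq N y S hS
  have hc : S.relIndex (N ⊔ S) = Nat.card (MulAction.orbit (↥N) y) := by
    rw [Subgroup.relIndex, ← hstabeq, MulAction.index_stabilizer, horb]
    exact (Nat.card_coe_set_eq _).symm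
  -- index identity
  have hrel : S.relIndex (N ⊔ S) * (N ⊔ S).index = S.index :=
    Subgroup.relIndex_mul_index le_sup_right
  have hmapidx : (N ⊔ S).index = (S.map φ).index := by
    have h1 : ((N ⊔ S).map φ).index = (N ⊔ S).index :=
      Subgroup.index_map_eq _ hφ le_sup_left
    have h2 : (N ⊔ S).map φ = S.map φ := by
      rw [Subgroup.map_sup]
      have : N.map φ = ⊥ := by rw [Subgroup.map_eq_bot_iff]
      rw [this, bot_sup_eq]
    rw [← h1, h2]
  calc k * Nat.card (MulAction.orbit (↥N) y)
      ≤ (S.map φ).index * Nat.card (MulAction.orbit (↥N) y) :=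
        Nat.mul_le_mul_right _ hk'
    _ = Nat.card Ω := by
        rw [hΩ, ← hrel, hmapidx, ← hc, Nat.mul_comm]
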